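/- Let E/F be an unramified quadratic field extension. Then for all r, n ∈ ℕ: (i) 𝒪_r^{(n)} = ∅ if n is odd or n > 2r; (ii) 𝒪_r^{(0)} = 𝒪_r^×; (iii) 𝒪_r^{(n)} = ϖ^{n/2}·(𝒪_{r−n/2}^× ∖ 𝒪_{r−n/2+1}^×) if n is even and 0 < n ≤ 2r. -/

import Mathlib

/-! `F` is a nonarchimedean local field with ring of integers `𝔬` (a DVR `o`) and
uniformizer `ϖ`; `E/F` is a quadratic field extension with ring of integers `𝒪`
(a DVR `O`), the inclusion `𝔬 → 𝒪` being the ring map `f`.  The element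
`β ∈ 𝒪 ∖ 𝔬` satisfies `𝒪 = 𝔬 + β𝔬` and `Nr(β) ∈ 𝔬^×`, where `Nr = Nr_{E/F}` is the
norm, pinned down by the Galois conjugation `σ` (an involutive ring endomorphism of
`𝒪` fixing `𝔬`) via `f (Nr z) = z · σ z`.  For `r ∈ ℕ`, `𝒪_r = 𝔬 + ϖ^rβ𝔬` and
`𝒪_r^{(n)} = {t ∈ 𝒪_r ∖ ϖ𝒪_r : Nr(t) ∈ ϖⁿ𝔬^×}`.  The extension is unramified
exactly when `f ϖ` is irreducible in `𝒪`. -/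

/-- The order `𝒪_r = 𝔬 + ϖ^rβ𝔬` of conductor `r`. -/
def ordSet {o O : Type*} [CommRing o] [CommRing O] (f : o →+* O) (ϖ : o) (β : O)
    (r : ℕ) : Set O :=
  {z | ∃ x y : o, z = f x + f (ϖ ^ r * y) * β}

/-- The unit group `𝒪_r^×` of the order `𝒪_r` (as a subset of `𝒪`). -/
def ordUnits {o O : Type*} [CommRing o] [CommRing O] (f : o →+* O) (ϖ : o) (β : O)
    (r : ℕ) : Set O :=
  {z | z ∈ ordSet f ϖ β r ∧ ∃ w ∈ ordSet f ϖ β r, z * w = 1}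

/-- The set `𝒪_r^{(n)} = {t ∈ 𝒪_r ∖ ϖ𝒪_r : Nr(t) ∈ ϖⁿ𝔬^×}`. -/
def ordLayer {o O : Type*} [CommRing o] [CommRing O] (f : o →+* O) (ϖ : o) (β : O)
    (Nr : O →* o) (r n : ℕ) : Set O :=
  {z | z ∈ ordSet f ϖ β r ∧ (¬ ∃ s ∈ ordSet f ϖ β r, z = f ϖ * s) ∧
    ∃ u : oˣ, Nr z = ϖ ^ n * u}

/-- If `E/F` is an unramified quadratic field extension then for all
`r, n ∈ ℕ`: (i) `𝒪_r^{(n)} = ∅` if `n` is odd or `n > 2r`; (ii) `𝒪_r^{(0)} = 𝒪_r^×`;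
(iii) `𝒪_r^{(n)} = ϖ^{n/2}·(𝒪_{r−n/2}^× ∖ 𝒪_{r−n/2+1}^×)` if `n` is even and
`0 < n ≤ 2r`. -/
theorem stmt_3 {o O : Type*} [CommRing o] [IsDomain o] [IsDiscreteValuationRing o]
    [CommRing O] [IsDomain O] [IsDiscreteValuationRing O]
    (f : o →+* O) (hf : Function.Injective f)
    (ϖ : o) (hϖ : Irreducible ϖ)
    (β : O) (hβ : β ∉ Set.range f)
    (hgen : ∀ z : O, ∃ x y : o, z = f x + f y * β)
    (σ : O →+* O) (hσf : ∀ x : o, σ (f x) = f x) (hσσ : ∀ z : O, σ (σ z) = z)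
    (Nr : O →* o) (hNr : ∀ z : O, f (Nr z) = z * σ z)
    (hβunit : IsUnit (Nr β))
    (hunram : Irreducible (f ϖ))
    (r n : ℕ) :
    ((Odd n ∨ 2 * r < n) → ordLayer f ϖ β Nr r n = ∅) ∧
    (ordLayer f ϖ β Nr r 0 = ordUnits f ϖ β r) ∧
    (Even n → 0 < n → n ≤ 2 * r →
      ordLayer f ϖ β Nr r n =
        (fun z => f (ϖ ^ (n / 2)) * z) ''
          (ordUnits f ϖ β (r - n / 2) \ ordUnits f ϖ β (r - n / 2 + 1))) := by
  have hϖ0 : ϖ ≠ 0 := hϖ.ne_zero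
  have hP0 : f ϖ ≠ 0 := hunram.ne_zero
  -- β is a unit
  have hβu : IsUnit β := by
    have h1 : IsUnit (f (Nr β)) := hβunit.map f
    rw [hNr] at h1
    exact isUnit_of_mul_isUnit_left h1
  -- norm of elements of o
  have hNrf : ∀ a : o, Nr (f a) = a * a := by
    intro a
    apply hf
    rw [hNr, hσf, map_mul]
  have hN0 : Nr (0 : O) = 0 := by
    apply hf
    rw [hNr]
    simp
  have hNneg : Nr (-1 : O) = 1 := by
    apply hf
    rw [hNr]
    simp
  have hNuO : ∀ z : O, IsUnit (Nr z) → IsUnit z := by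
    intro z h
    have h1 := h.map f
    rw [hNr] at h1
    exact isUnit_of_mul_isUnit_left h1
  -- uniqueness of representation
  have huniq : ∀ x y : o, f x + f y * β = 0 → x = 0 ∧ y = 0 := by
    intro x y h
    by_cases hy : y = 0
    · subst hy
      rw [map_zero, zero_mul, add_zero] at h
      exact ⟨hf (by simpa using h), rfl⟩
    · exfalso
      have hx : x ≠ 0 := by
        rintro rfl
        rw [map_zero, zero_add] at h
        rcases mul_eq_zero.mp h with h' | h'
        · exact hy (hf (by simpa using h'))
        · exact hβu.ne_zero h'
      have h1 : f x = -(f y * β) := eq_neg_of_add_eq_zero_left h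
      have hsq : Nr (f x) = Nr (-1 : O) * (Nr (f y) * Nr β) := by
        rw [← map_mul, ← map_mul]
        congr 1
        linear_combination h1
      rw [hNneg, hNrf, hNrf, one_mul] at hsq
      obtain ⟨ν, hν⟩ := hβunit
      obtain ⟨a, uu, hxa⟩ := IsDiscreteValuationRing.eq_unit_mul_pow_irreducible hx hϖ
      obtain ⟨b, vv, hyb⟩ := IsDiscreteValuationRing.eq_unit_mul_pow_irreducible hy hϖ
      have hcong : ↑(uu * uu) * ϖ ^ (a + a) = ↑(vv * vv * ν) * ϖ ^ (b + b) := by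
        rw [Units.val_mul, Units.val_mul, Units.val_mul, hν]
        rw [hxa, hyb] at hsq
        linear_combination hsq
      have hab : a + a = b + b :=
        IsDiscreteValuationRing.unit_mul_pow_congr_pow hϖ hϖ _ _ _ _ hcong
      have hab' : a = b := by omega
      subst hab'
      have key : f ϖ ^ a * f ↑uu = f ϖ ^ a * (-(f ↑vv * β)) := by
        rw [hxa, hyb] at h1
        simp only [map_mul, map_pow] at h1
        linear_combination h1
      have key2 : f ↑uu = -(f ↑vv * β) := mul_left_cancel₀ (pow_ne_zero a hP0) key
      have key3 : β = f (↑vv⁻¹ * -↑uu) := by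
        have hvv : (↑vv⁻¹ : o) * ↑vv = 1 := vv.inv_mul
        calc β = f (↑vv⁻¹ * ↑vv) * β := by rw [hvv, map_one, one_mul]
          _ = f ↑vv⁻¹ * (f ↑vv * β) := by rw [map_mul]; ring
          _ = f ↑vv⁻¹ * f (-↑uu) := by rw [map_neg]; linear_combination (f (↑vv⁻¹ : o)) * key2
          _ = f (↑vv⁻¹ * -↑uu) := by rw [map_mul]
      exact hβ ⟨_, key3.symm⟩
  -- divisibility characterisation
  have hdvd : ∀ (k : ℕ) (x y : o), f ϖ ^ k ∣ f x + f y * β ↔ ϖ ^ k ∣ x ∧ ϖ ^ k ∣ y := by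
    intro k x y
    constructor
    · rintro ⟨w, hw⟩
      obtain ⟨a, b, rfl⟩ := hgen w
      have h0 : f (x - ϖ ^ k * a) + f (y - ϖ ^ k * b) * β = 0 := by
        simp only [map_sub, map_mul, map_pow]
        linear_combination hw
      obtain ⟨h1, h2⟩ := huniq _ _ h0
      exact ⟨⟨a, by linear_combination h1⟩, ⟨b, by linear_combination h2⟩⟩
    · rintro ⟨⟨a, ha⟩, ⟨b, hb⟩⟩
      exact ⟨f a + f b * β, by rw [ha, hb]; simp only [map_mul, map_pow]; ring⟩
  -- conjugation of β
  have hτ : ∃ τ : o, σ β = f τ - β := by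
    obtain ⟨a, b, hab⟩ := hgen (β + σ β)
    by_cases hb : σ β = β
    · refine ⟨Nr (β + 1) - Nr β - 1, ?_⟩
      have h2 : f (Nr (β + 1)) = f (Nr β) + 2 * β + 1 := by
        rw [hNr, hNr, map_add, map_one, hb]
        ring
      rw [hb, map_sub, map_sub, map_one]
      linear_combination -h2
    · have h1 : σ (β + σ β) = β + σ β := by rw [map_add, hσσ]; ring
      have h2 : σ (β + σ β) = f a + f b * σ β := by rw [hab, map_add, map_mul, hσf, hσf]
      have hba : f b * (σ β - β) = 0 := by
        linear_combination (h2.symm.trans h1).trans hab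
      rcases mul_eq_zero.mp hba with h' | h'
      · have hb0 : b = 0 := hf (by simpa using h')
        rw [hb0, map_zero, zero_mul, add_zero] at hab
        exact ⟨a, by linear_combination hab⟩
      · exact absurd (by linear_combination h') hb
  obtain ⟨τ, hστ⟩ := hτ
  -- the orders are stable under conjugation and multiplication by f
  have hσmem : ∀ (k : ℕ) (z : O), z ∈ ordSet f ϖ β k → σ z ∈ ordSet f ϖ β k := by
    rintro k z ⟨x, y, rfl⟩
    refine ⟨x + ϖ ^ k * y * τ, -y, ?_⟩
    simp only [map_add, map_mul, map_pow, map_neg, hσf, hστ]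
    ring
  have hmul : ∀ (k : ℕ) (a : o) (z : O), z ∈ ordSet f ϖ β k → f a * z ∈ ordSet f ϖ β k := by
    rintro k a z ⟨x, y, rfl⟩
    exact ⟨a * x, a * y, by simp only [map_mul, map_pow]; ring⟩
  -- characterisation of the unit groups
  have hU : ∀ (k : ℕ) (z : O), z ∈ ordUnits f ϖ β k ↔ z ∈ ordSet f ϖ β k ∧ IsUnit (Nr z) := by
    intro k z
    constructor
    · rintro ⟨hz, w, hw, hzw⟩
      refine ⟨hz, IsUnit.of_mul_eq_one (Nr w) ?_⟩
      rw [← map_mul, hzw, map_one]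
    · rintro ⟨hz, hu⟩
      obtain ⟨c, hc⟩ := hu
      refine ⟨hz, f ↑c⁻¹ * σ z, hmul k _ _ (hσmem k z hz), ?_⟩
      have hzz : z * σ z = f ↑c := by rw [← hNr, hc]
      calc z * (f ↑c⁻¹ * σ z) = f ↑c⁻¹ * (z * σ z) := by ring
        _ = f ↑c⁻¹ * f ↑c := by rw [hzz]
        _ = 1 := by rw [← map_mul, Units.inv_mul, map_one]
  -- valuation decomposition
  have hval : ∀ z : O, z ≠ 0 →
      ∃ (k : ℕ) (w : Oˣ) (v : oˣ), z = ↑w * f ϖ ^ k ∧ Nr z = ↑v * ϖ ^ (2 * k) := by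
    intro z hz
    obtain ⟨k, w, hw⟩ := IsDiscreteValuationRing.eq_unit_mul_pow_irreducible hz hunram
    obtain ⟨v, hv⟩ := w.isUnit.map Nr
    refine ⟨k, w, v, hw, ?_⟩
    calc Nr z = Nr ↑w * Nr (f ϖ) ^ k := by rw [hw, map_mul, map_pow]
      _ = ↑v * ϖ ^ (2 * k) := by rw [hNrf, ← hv]; ring
  have hzne : ∀ (k : ℕ) (u : oˣ) (z : O), Nr z = ϖ ^ k * ↑u → z ≠ 0 := by
    rintro k u z hNz rfl
    rw [hN0] at hNz
    exact mul_ne_zero (pow_ne_zero k hϖ0) u.ne_zero hNz.symm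
  refine ⟨?_, ?_, ?_⟩
  · -- part (i)
    intro hcase
    ext z
    simp only [Set.mem_empty_iff_false, iff_false]
    rintro ⟨hz, hndvd, u, hNz⟩
    have hz0 : z ≠ 0 := hzne n u z hNz
    obtain ⟨k, w, v, hw, hv⟩ := hval z hz0
    have hn2k : n = 2 * k :=
      IsDiscreteValuationRing.unit_mul_pow_congr_pow hϖ hϖ u v n (2 * k)
        (by rw [← hv, hNz]; ring)
    rcases hcase with hodd | hgt
    · obtain ⟨j, hj⟩ := hodd
      omega
    · obtain ⟨x, y, hxy⟩ := hz
      have hne : f ϖ ^ (r + 1) ∣ z := by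
        rw [hw]
        exact (pow_dvd_pow (f ϖ) (by omega)).mul_left ↑w
      obtain ⟨hx, hy⟩ := (hdvd (r + 1) x (ϖ ^ r * y)).mp (hxy ▸ hne)
      obtain ⟨x', hx'⟩ : ϖ ∣ x := (dvd_pow_self ϖ (Nat.succ_ne_zero r)).trans hx
      obtain ⟨t, ht⟩ := hy
      have hyt : y = ϖ * t := by
        apply mul_left_cancel₀ (pow_ne_zero r hϖ0)
        rw [pow_succ] at ht
        linear_combination ht
      exact hndvd ⟨f x' + f (ϖ ^ r * t) * β, ⟨x', t, rfl⟩, by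
        rw [hxy, hx', hyt]
        simp only [map_mul, map_pow]
        ring⟩
  · -- part (ii)
    ext z
    rw [hU r z]
    constructor
    · rintro ⟨hz, -, u, hNz⟩
      exact ⟨hz, by rw [hNz, pow_zero, one_mul]; exact u.isUnit⟩
    · rintro ⟨hz, hu⟩
      obtain ⟨u, hu'⟩ := hu
      refine ⟨hz, ?_, u, by rw [pow_zero, one_mul]; exact hu'.symm⟩
      rintro ⟨s, hs, hzs⟩
      have hzu : IsUnit z := hNuO z (by rw [← hu']; exact u.isUnit)
      rw [hzs] at hzu
      exact hunram.not_isUnit (isUnit_of_mul_isUnit_left hzu)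
  · -- part (iii)
    intro hev hpos hle
    obtain ⟨m, hm⟩ := hev
    have hnm : n = 2 * m := by omega
    have hm2 : n / 2 = m := by omega
    have hmr : m ≤ r := by omega
    have hm1 : 1 ≤ m := by omega
    have hmm : ϖ ^ m = ϖ * ϖ ^ (m - 1) := by
      rw [← pow_succ']
      congr 1
      omega
    rw [hm2]
    ext z
    constructor
    · rintro ⟨hz, hndvd, u, hNz⟩
      have hz0 : z ≠ 0 := hzne n u z hNz
      obtain ⟨k, w, v, hw, hv⟩ := hval z hz0
      have hn2k : n = 2 * k :=
        IsDiscreteValuationRing.unit_mul_pow_congr_pow hϖ hϖ u v n (2 * k)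
          (by rw [← hv, hNz]; ring)
      have hkm : k = m := by omega
      obtain ⟨x, y, hxy⟩ := hz
      have hdm : f ϖ ^ m ∣ z := by
        rw [hw, ← hkm]
        exact dvd_mul_left _ _
      obtain ⟨hx, -⟩ := (hdvd m x (ϖ ^ r * y)).mp (hxy ▸ hdm)
      obtain ⟨x₁, hx₁⟩ := hx
      have hrm : ϖ ^ r * y = ϖ ^ m * (ϖ ^ (r - m) * y) := by
        rw [← mul_assoc, ← pow_add]
        congr 2
        omega
      set w' : O := f x₁ + f (ϖ ^ (r - m) * y) * β with hw'
      have hzw' : z = f (ϖ ^ m) * w' := by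
        rw [hw', hxy, hx₁, hrm]
        simp only [map_mul, map_pow]
        ring
      have hNzw : Nr z = ϖ ^ m * ϖ ^ m * Nr w' := by
        rw [hzw', map_mul, hNrf]
      have hcan : ϖ ^ m * ϖ ^ m * Nr w' = ϖ ^ m * ϖ ^ m * ↑u := by
        rw [← hNzw, hNz, hnm]
        ring
      have hNw' : Nr w' = ↑u :=
        mul_left_cancel₀ (mul_ne_zero (pow_ne_zero m hϖ0) (pow_ne_zero m hϖ0)) hcan
      have hw'U : w' ∈ ordUnits f ϖ β (r - m) :=
        (hU _ _).mpr ⟨⟨x₁, y, hw'⟩, by rw [hNw']; exact u.isUnit⟩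
      have hw'not : w' ∉ ordUnits f ϖ β (r - m + 1) := by
        rintro ⟨⟨a, b, hab⟩, -⟩
        have h0 : f (x₁ - a) + f (ϖ ^ (r - m) * y - ϖ ^ (r - m + 1) * b) * β = 0 := by
          simp only [map_sub]
          linear_combination hw'.symm.trans hab
        have h2 := (huniq _ _ h0).2
        have hyb : y = ϖ * b := by
          apply mul_left_cancel₀ (pow_ne_zero (r - m) hϖ0)
          rw [pow_succ] at h2
          linear_combination h2
        exact hndvd ⟨f (ϖ ^ (m - 1) * x₁) + f (ϖ ^ r * b) * β, ⟨_, _, rfl⟩, by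
          rw [hxy, hx₁, hyb, hmm]
          simp only [map_mul, map_pow]
          ring⟩
      exact ⟨w', ⟨hw'U, hw'not⟩, hzw'.symm⟩
    · rintro ⟨w', ⟨hw'U, hw'not⟩, rfl⟩
      show f (ϖ ^ m) * w' ∈ ordLayer f ϖ β Nr r n
      obtain ⟨hw's, hw'n⟩ := (hU _ _).mp hw'U
      obtain ⟨x, y, hxy⟩ := hw's
      have hyndvd : ¬ ϖ ∣ y := by
        rintro ⟨t, rfl⟩
        refine hw'not ((hU _ _).mpr ⟨⟨x, t, ?_⟩, hw'n⟩)
        have harg : ϖ ^ (r - m) * (ϖ * t) = ϖ ^ (r - m + 1) * t := by ring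
        rw [hxy, harg]
      have hpow : ϖ ^ m * ϖ ^ (r - m) = ϖ ^ r := by
        rw [← pow_add]
        congr 1
        omega
      have hz1 : f (ϖ ^ m) * w' = f (ϖ ^ m * x) + f (ϖ ^ r * y) * β := by
        rw [hxy, ← hpow]
        simp only [map_mul, map_pow]
        ring
      refine ⟨⟨ϖ ^ m * x, y, hz1⟩, ?_, ?_⟩
      · rintro ⟨s, ⟨a, b, hab⟩, heq⟩
        rw [hab] at heq
        have h0 : f (ϖ ^ m * x - ϖ * a) + f (ϖ ^ r * y - ϖ * (ϖ ^ r * b)) * β = 0 := by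
          simp only [map_sub, map_mul, map_pow] at *
          linear_combination hz1.symm.trans heq
        have h2 := (huniq _ _ h0).2
        refine hyndvd ⟨b, ?_⟩
        apply mul_left_cancel₀ (pow_ne_zero r hϖ0)
        linear_combination h2
      · obtain ⟨u, hu⟩ := hw'n
        refine ⟨u, ?_⟩
        rw [map_mul, hNrf, ← hu, hnm]
        ring
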